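/- Let 0 < ε ≤ 1/4, let c₁, c₂ > 0, and let 0 < r ≤ 1/2. Set D = {(x, t) ∈ ℝ² : 0 < t < r², √t < x < r}, and suppose f : D → ℝ is measurable and satisfies |f(x, t)| ≥ c₁ t^{-3/4} (-ln t)^{-1/4-ε} e^{-x²/t} - c₂ t^{-1/4} (-ln t)^{-1/4-ε} for almost every (x, t) ∈ D. Then ∫_D |f(x, t)|² dx dt = ∞. -/

import Mathlib

set_option maxHeartbeats 1000000

open MeasureTheory Real Set


lemma aux_div (a : ℝ) (ha : 0 < a) (ha' : a < 1) :
    ¬ IntegrableOn (fun t => (t * (-Real.log t))⁻¹) (Ioo 0 a) := by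
  intro h
  set M := ∫ t in Ioo 0 a, (t * (-Real.log t))⁻¹ with hM
  have hla : 0 < -Real.log a := by
    have := Real.log_neg ha ha'
    linarith
  have key : ∀ s ∈ Ioo (0:ℝ) a,
      Real.log (-Real.log s) - Real.log (-Real.log a) ≤ M := by
    intro s hs
    have hs0 : (0:ℝ) < s := hs.1
    have hsa : s < a := hs.2
    have hcont : ContinuousOn (fun t => (t * (-Real.log t))⁻¹) (Icc s a) := by
      apply ContinuousOn.inv₀
      · exact continuousOn_id.mul ((Real.continuousOn_log.mono
          (fun x hx => (lt_of_lt_of_le hs0 hx.1).ne')).neg)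
      · intro x hx
        have hx0 : 0 < x := lt_of_lt_of_le hs0 hx.1
        have hx1 : x < 1 := lt_of_le_of_lt hx.2 ha'
        have hlx : 0 < -Real.log x := by have := Real.log_neg hx0 hx1; linarith
        exact (mul_pos hx0 hlx).ne'
    have hderiv : ∀ x ∈ Icc s a,
        HasDerivAt (fun t => -Real.log (-Real.log t)) ((x * (-Real.log x))⁻¹) x := by
      intro x hx
      have hx0 : 0 < x := lt_of_lt_of_le hs0 hx.1
      have hx1 : x < 1 := lt_of_le_of_lt hx.2 ha'
      have hlx : 0 < -Real.log x := by have := Real.log_neg hx0 hx1; linarith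
      have h1 : HasDerivAt (fun t => -Real.log t) (-(x⁻¹)) x :=
        (Real.hasDerivAt_log hx0.ne').neg
      have h2 : HasDerivAt (fun t => Real.log (-Real.log t)) ((-Real.log x)⁻¹ * (-(x⁻¹))) x :=
        by have := (Real.hasDerivAt_log hlx.ne').comp x h1; exact this
      have h3 : HasDerivAt (fun t => -Real.log (-Real.log t)) (-((-Real.log x)⁻¹ * (-(x⁻¹)))) x :=
        h2.neg
      convert h3 using 1
      rw [mul_inv]
      ring
    have hii : IntervalIntegrable (fun t => (t * (-Real.log t))⁻¹) volume s a := by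
      apply ContinuousOn.intervalIntegrable
      rwa [Set.uIcc_of_le hsa.le]
    have hftc := intervalIntegral.integral_eq_sub_of_hasDerivAt
      (fun x hx => hderiv x (by rwa [Set.uIcc_of_le hsa.le] at hx)) hii
    have heq : ∫ t in s..a, (t * (-Real.log t))⁻¹
        = Real.log (-Real.log s) - Real.log (-Real.log a) := by
      rw [hftc]; ring
    have hmono : ∫ t in s..a, (t * (-Real.log t))⁻¹ ≤ M := by
      rw [intervalIntegral.integral_of_le hsa.le,
        MeasureTheory.integral_Ioc_eq_integral_Ioo]
      apply setIntegral_mono_set h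
      · filter_upwards [self_mem_ae_restrict measurableSet_Ioo] with x hx
        have hx1 : x < 1 := lt_trans hx.2 ha'
        have hl := Real.log_neg hx.1 hx1
        exact inv_nonneg.mpr (mul_pos hx.1 (by linarith : (0:ℝ) < -Real.log x)).le
      · exact Filter.Eventually.of_forall (fun x hx => ⟨lt_trans hs0 hx.1, hx.2⟩)
    linarith [heq ▸ hmono]
  -- choose s small
  set s := min (a/2) (Real.exp (-(Real.exp (M + Real.log (-Real.log a) + 1)))) with hsdef
  have hs0 : 0 < s := lt_min (by linarith) (Real.exp_pos _)
  have hsa : s < a := lt_of_le_of_lt (min_le_left _ _) (by linarith)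
  have hbig : Real.exp (M + Real.log (-Real.log a) + 1) ≤ -Real.log s := by
    have h1 : s ≤ Real.exp (-(Real.exp (M + Real.log (-Real.log a) + 1))) := min_le_right _ _
    have h2 : Real.log s ≤ -(Real.exp (M + Real.log (-Real.log a) + 1)) := by
      calc Real.log s ≤ Real.log (Real.exp _) := Real.log_le_log hs0 h1
        _ = _ := Real.log_exp _
    linarith
  have hls : 0 < -Real.log s := lt_of_lt_of_le (Real.exp_pos _) hbig
  have h3 : M + Real.log (-Real.log a) + 1 ≤ Real.log (-Real.log s) := by
    calc M + Real.log (-Real.log a) + 1 = Real.log (Real.exp (M + Real.log (-Real.log a) + 1)) :=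
      (Real.log_exp _).symm
    _ ≤ Real.log (-Real.log s) := Real.log_le_log (Real.exp_pos _) hbig
  have := key s ⟨hs0, hsa⟩
  linarith



lemma aux_div2 (ε a : ℝ) (hε : 0 < ε) (hε' : ε ≤ 1/4) (ha : 0 < a) (ha' : a ≤ 1/8) :
    ¬ IntegrableOn (fun t => t ^ (-1 : ℝ) * (-Real.log t) ^ (-(1/2) - 2*ε)) (Ioo 0 a) := by
  intro h
  have ha1 : a < 1 := by linarith
  apply aux_div a ha ha1
  apply Integrable.mono h
  · exact ((measurable_id.mul Real.measurable_log.neg).inv).aestronglyMeasurable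
  · filter_upwards [self_mem_ae_restrict measurableSet_Ioo] with t ht
    have ht0 : 0 < t := ht.1
    have hlog : 1 ≤ -Real.log t := by
      have h8 : Real.log t ≤ Real.log (1/8) := Real.log_le_log ht0 (by linarith [ht.2])
      have : Real.log (1/8) = -Real.log 8 := by
        rw [one_div, Real.log_inv]
      have he : (1:ℝ) ≤ Real.log 8 := by
        rw [Real.le_log_iff_exp_le (by norm_num)]
        have := Real.exp_one_lt_d9
        norm_num at this ⊢
        linarith
      linarith
    have hlt : 0 < -Real.log t := by linarith
    have h1 : (t * (-Real.log t))⁻¹ = t ^ (-1:ℝ) * (-Real.log t) ^ (-1:ℝ) := by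
      rw [mul_inv, Real.rpow_neg_one, Real.rpow_neg_one]
    have h2 : (-Real.log t) ^ (-1:ℝ) ≤ (-Real.log t) ^ (-(1/2) - 2*ε) :=
      Real.rpow_le_rpow_of_exponent_le hlog (by linarith)
    have h3 : (t * (-Real.log t))⁻¹ ≤ t ^ (-1:ℝ) * (-Real.log t) ^ (-(1/2) - 2*ε) := by
      rw [h1]
      exact mul_le_mul_of_nonneg_left h2 (Real.rpow_nonneg ht0.le _)
    have h4 : (0:ℝ) ≤ (t * (-Real.log t))⁻¹ := inv_nonneg.mpr (mul_pos ht0 hlt).le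
    have h5 : (0:ℝ) ≤ t ^ (-1:ℝ) * (-Real.log t) ^ (-(1/2) - 2*ε) :=
      mul_nonneg (Real.rpow_nonneg ht0.le _) (Real.rpow_nonneg hlt.le _)
    rw [Real.norm_eq_abs, Real.norm_eq_abs, abs_of_nonneg h4, abs_of_nonneg h5]
    exact h3



lemma aux_rect (c r : ℝ) (hr : 0 < r) :
    IntegrableOn (fun p : ℝ × ℝ => c * p.2 ^ (-(1/2) : ℝ)) (Ioo 0 r ×ˢ Ioo 0 (r^2)) volume := by
  have hmeas : Measurable (fun p : ℝ × ℝ => c * p.2 ^ (-(1/2) : ℝ)) := by fun_prop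
  rw [IntegrableOn, Measure.volume_eq_prod, ← Measure.prod_restrict]
  rw [integrable_prod_iff' (hmeas.aestronglyMeasurable)]
  constructor
  · filter_upwards with y
    exact integrable_const _
  · have hconst : ∀ y : ℝ, (∫ x, ‖c * y ^ (-(1/2) : ℝ)‖ ∂(volume.restrict (Ioo 0 r)))
        = r * ‖c * y ^ (-(1/2) : ℝ)‖ := by
      intro y
      rw [integral_const, measureReal_restrict_apply_univ, Real.volume_real_Ioo_of_le (by linarith),
        smul_eq_mul]
      ring_nf
    simp only [hconst]
    apply Integrable.congr (g := fun y => r * ‖c * y ^ (-(1/2) : ℝ)‖)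
      (f := fun y => (r * |c|) * y ^ (-(1/2) : ℝ))
    · apply Integrable.const_mul
      have : IntegrableOn (fun y : ℝ => y ^ (-(1/2) : ℝ)) (Ioo 0 (r^2)) volume := by
        rw [intervalIntegral.integrableOn_Ioo_rpow_iff (by positivity)]
        norm_num
      exact this
    · filter_upwards [self_mem_ae_restrict measurableSet_Ioo] with y hy
      rw [Real.norm_eq_abs, abs_mul, abs_of_nonneg (Real.rpow_nonneg hy.1.le _)]
      ring


theorem stmt_16 (ε c₁ c₂ r : ℝ) (hε : 0 < ε) (hε' : ε ≤ 1/4)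
    (hc₁ : 0 < c₁) (hc₂ : 0 < c₂) (hr : 0 < r) (hr' : r ≤ 1/2)
    (D : Set (ℝ × ℝ))
    (hD : D = {p : ℝ × ℝ | 0 < p.2 ∧ p.2 < r^2 ∧ Real.sqrt p.2 < p.1 ∧ p.1 < r})
    (f : ℝ × ℝ → ℝ) (hf : Measurable f)
    (hlow : ∀ᵐ p ∂(volume.restrict D),
      c₁ * p.2 ^ (-(3/4) : ℝ) * (-Real.log p.2) ^ (-(1/4) - ε) * Real.exp (-(p.1^2)/p.2)
        - c₂ * p.2 ^ (-(1/4) : ℝ) * (-Real.log p.2) ^ (-(1/4) - ε) ≤ |f p|) :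
    ¬ IntegrableOn (fun p : ℝ × ℝ => |f p|^2) D volume := by
  intro hI
  have hr2pos : (0:ℝ) < r^2 := by positivity
  have hr2 : r^2 ≤ 1/4 := by nlinarith
  -- on (0, 1/4], -log t ≥ 1
  have hlog1 : ∀ t : ℝ, 0 < t → t ≤ 1/4 → 1 ≤ -Real.log t := by
    intro t ht0 ht4
    have h8 : Real.log t ≤ Real.log (1/4) := Real.log_le_log ht0 ht4
    have h4 : Real.log (1/4) = -Real.log 4 := by rw [one_div, Real.log_inv]
    have he : (1:ℝ) ≤ Real.log 4 := by
      rw [Real.le_log_iff_exp_le (by norm_num)]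
      have := Real.exp_one_lt_d9
      norm_num at this ⊢
      linarith
    linarith
  -- measurability of D and D'
  have hDmeas : MeasurableSet D := by
    rw [hD]
    apply MeasurableSet.inter (measurableSet_lt measurable_const measurable_snd)
    apply MeasurableSet.inter (measurableSet_lt measurable_snd measurable_const)
    exact MeasurableSet.inter
      (measurableSet_lt (Real.continuous_sqrt.measurable.comp measurable_snd) measurable_fst)
      (measurableSet_lt measurable_fst measurable_const)
  set D' : Set (ℝ × ℝ) :=
    {p : ℝ × ℝ | 0 < p.2 ∧ p.2 < r^2/2 ∧ Real.sqrt p.2 < p.1 ∧ p.1 < Real.sqrt (2*p.2)}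
    with hD'def
  have hD'meas : MeasurableSet D' := by
    apply MeasurableSet.inter (measurableSet_lt measurable_const measurable_snd)
    apply MeasurableSet.inter (measurableSet_lt measurable_snd measurable_const)
    exact MeasurableSet.inter
      (measurableSet_lt (Real.continuous_sqrt.measurable.comp measurable_snd) measurable_fst)
      (measurableSet_lt measurable_fst
        (Real.continuous_sqrt.measurable.comp (measurable_snd.const_mul 2)))
  have hsub : D' ⊆ D := by
    rintro ⟨x, t⟩ ⟨ht0, ht1, ht2, ht3⟩
    rw [hD]
    refine ⟨ht0, by linarith, ht2, ?_⟩
    calc x < Real.sqrt (2*t) := ht3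
      _ < Real.sqrt (r^2) := Real.sqrt_lt_sqrt (by linarith) (by linarith)
      _ = r := Real.sqrt_sq hr.le
  have hrect : D ⊆ Ioo 0 r ×ˢ Ioo 0 (r^2) := by
    rintro ⟨x, t⟩ hp
    rw [hD] at hp
    obtain ⟨ht0, ht1, ht2, ht3⟩ := hp
    exact ⟨⟨lt_of_le_of_lt (Real.sqrt_nonneg t) ht2, ht3⟩, ht0, ht1⟩
  -- the square of the "error" term is integrable on D
  have hHint : IntegrableOn
      (fun p : ℝ × ℝ => (c₂ * p.2 ^ (-(1/4) : ℝ) * (-Real.log p.2) ^ (-(1/4) - ε))^2) D := by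
    apply Integrable.mono ((aux_rect (c₂^2) r hr).mono_set hrect)
    · apply Measurable.aestronglyMeasurable; measurability
    · filter_upwards [self_mem_ae_restrict hDmeas] with p hp
      rw [hD] at hp
      obtain ⟨ht0, ht1, _, _⟩ := hp
      have hl1 : 1 ≤ -Real.log p.2 := hlog1 p.2 ht0 (by linarith)
      have hB : (-Real.log p.2) ^ (-(1/4) - ε) ≤ 1 :=
        Real.rpow_le_one_of_one_le_of_nonpos hl1 (by linarith)
      have hBnn : (0:ℝ) ≤ (-Real.log p.2) ^ (-(1/4) - ε) :=
        Real.rpow_nonneg (by linarith) _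
      have hA2 : (p.2 ^ (-(1/4):ℝ))^2 = p.2 ^ (-(1/2):ℝ) := by
        rw [← Real.rpow_natCast (p.2 ^ (-(1/4):ℝ)) 2, ← Real.rpow_mul ht0.le]
        norm_num
      have hAnn : (0:ℝ) ≤ p.2 ^ (-(1/2):ℝ) := Real.rpow_nonneg ht0.le _
      have key : (c₂ * p.2 ^ (-(1/4) : ℝ) * (-Real.log p.2) ^ (-(1/4) - ε))^2
          ≤ c₂^2 * p.2 ^ (-(1/2) : ℝ) := by
        have expand : (c₂ * p.2 ^ (-(1/4) : ℝ) * (-Real.log p.2) ^ (-(1/4) - ε))^2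
            = c₂^2 * (p.2 ^ (-(1/4):ℝ))^2 * ((-Real.log p.2) ^ (-(1/4) - ε))^2 := by ring
        rw [expand, hA2]
        have hB2 : ((-Real.log p.2) ^ (-(1/4) - ε))^2 ≤ 1 := by nlinarith
        exact mul_le_of_le_one_right (mul_nonneg (sq_nonneg c₂) hAnn) hB2
      rw [Real.norm_eq_abs, Real.norm_eq_abs, abs_of_nonneg (sq_nonneg _),
        abs_of_nonneg (by positivity : (0:ℝ) ≤ c₂^2 * p.2 ^ (-(1/2):ℝ))]
      exact key
  -- the main lower bound squared is integrable on D'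
  set Gsq : ℝ × ℝ → ℝ :=
    fun p => (c₁ * Real.exp (-2) * p.2 ^ (-(3/4) : ℝ) * (-Real.log p.2) ^ (-(1/4) - ε))^2
    with hGsqdef
  have hGint : IntegrableOn Gsq D' := by
    have hmaj0 : IntegrableOn
        (fun p : ℝ × ℝ => 2*|f p|^2
          + 2*(c₂ * p.2 ^ (-(1/4) : ℝ) * (-Real.log p.2) ^ (-(1/4) - ε))^2) D := by
      exact (hI.const_mul 2).add (hHint.const_mul 2)
    have hmaj := hmaj0.mono_set hsub
    apply Integrable.mono hmaj
    · apply Measurable.aestronglyMeasurable; measurability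
    · have hlow' := ae_restrict_of_ae_restrict_of_subset hsub hlow
      filter_upwards [self_mem_ae_restrict hD'meas, hlow'] with p hp hlowp
      obtain ⟨ht0, ht1, ht2, ht3⟩ := hp
      have hl1 : 1 ≤ -Real.log p.2 := hlog1 p.2 ht0 (by linarith)
      have hx0 : 0 ≤ p.1 := le_trans (Real.sqrt_nonneg _) ht2.le
      have hxx : p.1^2 < 2*p.2 := (Real.lt_sqrt hx0).mp ht3
      have hexp : Real.exp (-2) ≤ Real.exp (-(p.1^2)/p.2) := by
        apply Real.exp_le_exp.mpr
        rw [neg_div, neg_le_neg_iff, div_le_iff₀ ht0]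
        linarith
      have hGle : c₁ * Real.exp (-2) * p.2 ^ (-(3/4) : ℝ) * (-Real.log p.2) ^ (-(1/4) - ε)
          ≤ |f p| + c₂ * p.2 ^ (-(1/4) : ℝ) * (-Real.log p.2) ^ (-(1/4) - ε) := by
        have h1 : c₁ * Real.exp (-2) * p.2 ^ (-(3/4) : ℝ) * (-Real.log p.2) ^ (-(1/4) - ε)
            ≤ c₁ * p.2 ^ (-(3/4) : ℝ) * (-Real.log p.2) ^ (-(1/4) - ε)
              * Real.exp (-(p.1^2)/p.2) := by
          have hnn : (0:ℝ) ≤ c₁ * p.2 ^ (-(3/4) : ℝ) * (-Real.log p.2) ^ (-(1/4) - ε) := by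
            have := Real.rpow_nonneg ht0.le (-(3/4):ℝ)
            have := Real.rpow_nonneg (show (0:ℝ) ≤ -Real.log p.2 by linarith) (-(1/4) - ε)
            positivity
          calc c₁ * Real.exp (-2) * p.2 ^ (-(3/4) : ℝ) * (-Real.log p.2) ^ (-(1/4) - ε)
              = (c₁ * p.2 ^ (-(3/4) : ℝ) * (-Real.log p.2) ^ (-(1/4) - ε)) * Real.exp (-2) := by
                ring
            _ ≤ (c₁ * p.2 ^ (-(3/4) : ℝ) * (-Real.log p.2) ^ (-(1/4) - ε))
                * Real.exp (-(p.1^2)/p.2) := mul_le_mul_of_nonneg_left hexp hnn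
        linarith
      have hGnn : (0:ℝ) ≤ c₁ * Real.exp (-2) * p.2 ^ (-(3/4) : ℝ)
          * (-Real.log p.2) ^ (-(1/4) - ε) := by
        have := Real.rpow_nonneg ht0.le (-(3/4):ℝ)
        have := Real.rpow_nonneg (show (0:ℝ) ≤ -Real.log p.2 by linarith) (-(1/4) - ε)
        positivity
      have hhnn : (0:ℝ) ≤ c₂ * p.2 ^ (-(1/4) : ℝ) * (-Real.log p.2) ^ (-(1/4) - ε) := by
        have := Real.rpow_nonneg ht0.le (-(1/4):ℝ)
        have := Real.rpow_nonneg (show (0:ℝ) ≤ -Real.log p.2 by linarith) (-(1/4) - ε)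
        positivity
      rw [Real.norm_eq_abs, Real.norm_eq_abs, abs_of_nonneg (sq_nonneg _)]
      have habs : |f p| ≥ 0 := abs_nonneg _
      have key : Gsq p ≤ 2*|f p|^2
          + 2*(c₂ * p.2 ^ (-(1/4) : ℝ) * (-Real.log p.2) ^ (-(1/4) - ε))^2 := by
        rw [hGsqdef]
        nlinarith [sq_nonneg (|f p| - c₂ * p.2 ^ (-(1/4) : ℝ) * (-Real.log p.2) ^ (-(1/4) - ε))]
      calc Gsq p ≤ _ := key
        _ ≤ |2*|f p|^2
          + 2*(c₂ * p.2 ^ (-(1/4) : ℝ) * (-Real.log p.2) ^ (-(1/4) - ε))^2| := le_abs_self _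
  -- now derive a contradiction via Fubini
  have hind : Integrable (D'.indicator Gsq) (volume.prod volume) := by
    rw [← Measure.volume_eq_prod]
    exact (integrable_indicator_iff hD'meas).mpr hGint
  have hfub := ((integrable_prod_iff' hind.aestronglyMeasurable).mp hind).2
  have hfub' : IntegrableOn (fun t => ∫ x, ‖D'.indicator Gsq (x, t)‖) (Ioo 0 (r^2/2)) volume :=
    hfub.integrableOn
  set K : ℝ := (Real.sqrt 2 - 1) * (c₁ * Real.exp (-2))^2 with hK
  have hKpos : 0 < K := by
    have h2 : (1:ℝ) < Real.sqrt 2 := by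
      rw [show (1:ℝ) = Real.sqrt 1 by simp]
      exact Real.sqrt_lt_sqrt (by norm_num) (by norm_num)
    have : (0:ℝ) < (c₁ * Real.exp (-2))^2 := by positivity
    rw [hK]; nlinarith
  have hcongr : IntegrableOn
      (fun t : ℝ => K * (t ^ (-1 : ℝ) * (-Real.log t) ^ (-(1/2) - 2*ε))) (Ioo 0 (r^2/2))
      volume := by
    apply Integrable.congr hfub'
    filter_upwards [self_mem_ae_restrict measurableSet_Ioo] with t ht
    obtain ⟨ht0, htr⟩ := ht
    have hl1 : 1 ≤ -Real.log t := hlog1 t ht0 (by nlinarith)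
    have hln : (0:ℝ) ≤ -Real.log t := by linarith
    -- the slice
    have hslice : (fun x => ‖D'.indicator Gsq (x, t)‖)
        = (Ioo (Real.sqrt t) (Real.sqrt (2*t))).indicator (fun _ => Gsq (0, t)) := by
      funext x
      have hGconst : Gsq (x, t) = Gsq (0, t) := rfl
      by_cases hx : x ∈ Ioo (Real.sqrt t) (Real.sqrt (2*t))
      · have hmem : (x, t) ∈ D' := ⟨ht0, htr, hx.1, hx.2⟩
        rw [indicator_of_mem hx, indicator_of_mem hmem, hGconst,
          Real.norm_eq_abs, abs_of_nonneg (sq_nonneg _)]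
      · have hmem : (x, t) ∉ D' := by
          intro hmem
          exact hx ⟨hmem.2.2.1, hmem.2.2.2⟩
        rw [indicator_of_notMem hx, indicator_of_notMem hmem]
        simp
    rw [hslice, integral_indicator measurableSet_Ioo, setIntegral_const,
      Real.volume_real_Ioo_of_le (Real.sqrt_le_sqrt (by linarith : t ≤ 2*t)), smul_eq_mul]
    -- algebra
    have hs2 : Real.sqrt (2*t) = Real.sqrt 2 * Real.sqrt t := Real.sqrt_mul (by norm_num) t
    have hsrt : Real.sqrt t = t ^ ((1:ℝ)/2) := Real.sqrt_eq_rpow t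
    have hA2 : (t ^ (-(3/4):ℝ))^2 = t ^ (-(3/2):ℝ) := by
      rw [← Real.rpow_natCast (t ^ (-(3/4):ℝ)) 2, ← Real.rpow_mul ht0.le]
      norm_num
    have hB2 : ((-Real.log t) ^ (-(1/4) - ε))^2 = (-Real.log t) ^ (-(1/2) - 2*ε) := by
      rw [← Real.rpow_natCast ((-Real.log t) ^ (-(1/4) - ε)) 2, ← Real.rpow_mul hln]
      ring_nf
    have hC : t ^ ((1:ℝ)/2) * t ^ (-(3/2):ℝ) = t ^ (-1:ℝ) := by
      rw [← Real.rpow_add ht0]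
      norm_num
    have expand : Gsq (0, t)
        = (c₁ * Real.exp (-2))^2 * (t ^ (-(3/4):ℝ))^2 * ((-Real.log t) ^ (-(1/4) - ε))^2 := by
      rw [hGsqdef]; ring
    rw [expand, hA2, hB2, hs2, hsrt, hK]
    linear_combination ((Real.sqrt 2 - 1) * (c₁ * Real.exp (-2))^2
      * ((-Real.log t) ^ (-(1/2) - 2*ε))) * hC
  -- remove the constant and contradict the divergence lemma
  have hfinal : IntegrableOn
      (fun t : ℝ => t ^ (-1 : ℝ) * (-Real.log t) ^ (-(1/2) - 2*ε)) (Ioo 0 (r^2/2)) volume := by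
    have := hcongr.const_mul K⁻¹
    apply Integrable.congr this
    filter_upwards with t
    field_simp
  exact aux_div2 ε (r^2/2) hε hε' (by positivity) (by nlinarith) hfinal
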